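/- For every s ≥ 1 there exists a constant C > 0 depending only on s (one may take C = 4) such that for every τ ≥ 0, every d ≥ 1, and all nonzero j, k, l ∈ ℤ^d with j + k = l, |e^{τ|l|^{1/s}} − e^{τ|k|^{1/s}}| ≤ C τ |j| (|k|^{1−1/s} + |l|^{1−1/s})^{−1} e^{τ|j|^{1/s}} e^{τ|k|^{1/s}}. -/

import Mathlib

/-- The Euclidean norm of `k ∈ ℤ^d`. -/
noncomputable def znorm {d : ℕ} (k : Fin d → ℤ) : ℝ :=
  Real.sqrt (∑ i, ((k i : ℝ)) ^ 2)

private lemma znorm_eq_norm {d : ℕ} (k : Fin d → ℤ) :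
    znorm k = ‖(WithLp.equiv 2 (Fin d → ℝ)).symm (fun i => (k i : ℝ))‖ := by
  rw [EuclideanSpace.norm_eq, znorm]
  congr 1
  refine Finset.sum_congr rfl fun i _ => ?_
  simp [sq_abs]

private lemma one_le_znorm {d : ℕ} {k : Fin d → ℤ} (hk : k ≠ 0) : 1 ≤ znorm k := by
  obtain ⟨i, hi⟩ := Function.ne_iff.mp hk
  have h0 : (1:ℝ) ≤ |(k i : ℝ)| := by
    rw [← Int.cast_abs]
    exact_mod_cast Int.one_le_abs (by simpa using hi)
  have h1 : (1:ℝ) ≤ (k i : ℝ) ^ 2 := by nlinarith [sq_abs ((k i : ℝ))]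
  have h2 : (1:ℝ) ≤ ∑ i, ((k i : ℝ)) ^ 2 :=
    h1.trans (Finset.single_le_sum (f := fun i => ((k i : ℝ)) ^ 2)
      (fun i _ => sq_nonneg _) (Finset.mem_univ i))
  calc (1:ℝ) = Real.sqrt 1 := Real.sqrt_one.symm
    _ ≤ _ := Real.sqrt_le_sqrt h2

private lemma znorm_triangle {d : ℕ} (j k l : Fin d → ℤ) (h : j + k = l) :
    |znorm l - znorm k| ≤ znorm j := by
  set v : (Fin d → ℤ) → EuclideanSpace ℝ (Fin d) :=
    fun x => (WithLp.equiv 2 (Fin d → ℝ)).symm (fun i => (x i : ℝ)) with hv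
  have hadd : v l = v j + v k := by
    ext i
    have := congrFun h i
    simp only [hv, WithLp.equiv_symm_apply, PiLp.toLp_apply, PiLp.add_apply]
    rw [← this, Pi.add_apply]
    push_cast
    ring
  rw [znorm_eq_norm, znorm_eq_norm, znorm_eq_norm]
  have hsub : v l - v k = v j := by rw [hadd]; abel
  calc |‖v l‖ - ‖v k‖| ≤ ‖v l - v k‖ := abs_norm_sub_norm_le _ _
    _ = ‖v j‖ := by rw [hsub]

private lemma rpow_subadd {x y θ : ℝ} (hx : 0 ≤ x) (hy : 0 ≤ y)
    (hθ0 : 0 ≤ θ) (hθ1 : θ ≤ 1) :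
    (x + y) ^ θ ≤ x ^ θ + y ^ θ := by
  have h := NNReal.rpow_add_le_add_rpow x.toNNReal y.toNNReal hθ0 hθ1
  have h' := NNReal.coe_le_coe.mpr h
  simpa [NNReal.coe_rpow, Real.coe_toNNReal x hx, Real.coe_toNNReal y hy,
    Real.toNNReal_add hx hy] using h'

private lemma pow_diff_mul_le {θ a b : ℝ} (hθ0 : 0 ≤ θ) (hθ1 : θ ≤ 1)
    (ha : 1 ≤ a) (hab : a ≤ b) :
    (b ^ θ - a ^ θ) * (a ^ (1 - θ) + b ^ (1 - θ)) ≤ 2 * (b - a) := by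
  have ha0 : (0:ℝ) < a := lt_of_lt_of_le one_pos ha
  have hb0 : (0:ℝ) < b := lt_of_lt_of_le ha0 hab
  have h1 : b ^ θ * a ^ (1 - θ) ≤ b := by
    calc b ^ θ * a ^ (1 - θ) ≤ b ^ θ * b ^ (1 - θ) := by
          have : a ^ (1 - θ) ≤ b ^ (1 - θ) := Real.rpow_le_rpow ha0.le hab (by linarith)
          exact mul_le_mul_of_nonneg_left this (Real.rpow_nonneg hb0.le θ)
      _ = b := by rw [← Real.rpow_add hb0]; norm_num
  have h2 : a ≤ a ^ θ * b ^ (1 - θ) := by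
    calc a = a ^ θ * a ^ (1 - θ) := by rw [← Real.rpow_add ha0]; norm_num
      _ ≤ a ^ θ * b ^ (1 - θ) := by
          have : a ^ (1 - θ) ≤ b ^ (1 - θ) := Real.rpow_le_rpow ha0.le hab (by linarith)
          exact mul_le_mul_of_nonneg_left this (Real.rpow_nonneg ha0.le θ)
  have h3 : b ^ θ * b ^ (1 - θ) = b := by rw [← Real.rpow_add hb0]; norm_num
  have h4 : a ^ θ * a ^ (1 - θ) = a := by rw [← Real.rpow_add ha0]; norm_num
  nlinarith [h1, h2, h3, h4]

private lemma exp_sub_exp_le {x y : ℝ} (_h : x ≤ y) :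
    Real.exp y - Real.exp x ≤ Real.exp y * (y - x) := by
  have key : Real.exp y * Real.exp (x - y) = Real.exp x := by
    rw [← Real.exp_add]; ring_nf
  nlinarith [Real.add_one_le_exp (x - y), Real.exp_pos y, key]

private lemma gevrey_main_aux {θ τ a b c : ℝ} (hθ0 : 0 < θ) (hθ1 : θ ≤ 1) (hτ : 0 ≤ τ)
    (ha : 1 ≤ a) (hab : a ≤ b) (hc : 0 ≤ c) (hdiff : b - a ≤ c) :
    Real.exp (τ * b ^ θ) - Real.exp (τ * a ^ θ) ≤
      4 * τ * c * (a ^ (1 - θ) + b ^ (1 - θ))⁻¹ *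
        Real.exp (τ * c ^ θ) * Real.exp (τ * a ^ θ) := by
  have ha0 : (0:ℝ) < a := lt_of_lt_of_le one_pos ha
  have hb0 : (0:ℝ) < b := lt_of_lt_of_le ha0 hab
  have hD : (0:ℝ) < a ^ (1 - θ) + b ^ (1 - θ) := by positivity
  have haθ : a ^ θ ≤ b ^ θ := Real.rpow_le_rpow ha0.le hab hθ0.le
  have step1 : Real.exp (τ * b ^ θ) - Real.exp (τ * a ^ θ) ≤
      Real.exp (τ * b ^ θ) * (τ * (b ^ θ - a ^ θ)) := by
    have := exp_sub_exp_le (mul_le_mul_of_nonneg_left haθ hτ)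
    calc Real.exp (τ * b ^ θ) - Real.exp (τ * a ^ θ)
        ≤ Real.exp (τ * b ^ θ) * (τ * b ^ θ - τ * a ^ θ) := this
      _ = Real.exp (τ * b ^ θ) * (τ * (b ^ θ - a ^ θ)) := by ring
  have step2 : Real.exp (τ * b ^ θ) ≤ Real.exp (τ * c ^ θ) * Real.exp (τ * a ^ θ) := by
    rw [← Real.exp_add]
    apply Real.exp_le_exp.mpr
    have hb_le : b ≤ c + a := by linarith
    have h1 : b ^ θ ≤ (c + a) ^ θ := Real.rpow_le_rpow hb0.le hb_le hθ0.le
    have h2 : (c + a) ^ θ ≤ c ^ θ + a ^ θ := rpow_subadd hc ha0.le hθ0.le hθ1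
    have h12 : b ^ θ ≤ c ^ θ + a ^ θ := h1.trans h2
    calc τ * b ^ θ ≤ τ * (c ^ θ + a ^ θ) := mul_le_mul_of_nonneg_left h12 hτ
      _ = τ * c ^ θ + τ * a ^ θ := by ring
  have step3 : b ^ θ - a ^ θ ≤ 2 * c * (a ^ (1 - θ) + b ^ (1 - θ))⁻¹ := by
    rw [← div_eq_mul_inv, le_div_iff₀ hD]
    calc (b ^ θ - a ^ θ) * (a ^ (1 - θ) + b ^ (1 - θ)) ≤ 2 * (b - a) :=
          pow_diff_mul_le hθ0.le hθ1 ha hab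
      _ ≤ 2 * c := by linarith
  have hnn1 : (0:ℝ) ≤ τ * (b ^ θ - a ^ θ) := by
    have h : 0 ≤ b ^ θ - a ^ θ := by linarith
    positivity
  have hE : (0:ℝ) ≤ Real.exp (τ * c ^ θ) * Real.exp (τ * a ^ θ) := by positivity
  calc Real.exp (τ * b ^ θ) - Real.exp (τ * a ^ θ)
      ≤ Real.exp (τ * b ^ θ) * (τ * (b ^ θ - a ^ θ)) := step1
    _ ≤ (Real.exp (τ * c ^ θ) * Real.exp (τ * a ^ θ)) *
          (τ * (2 * c * (a ^ (1 - θ) + b ^ (1 - θ))⁻¹)) :=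
        mul_le_mul step2 (mul_le_mul_of_nonneg_left step3 hτ) hnn1 hE
    _ ≤ 4 * τ * c * (a ^ (1 - θ) + b ^ (1 - θ))⁻¹ *
        Real.exp (τ * c ^ θ) * Real.exp (τ * a ^ θ) := by
        have h2 : (0:ℝ) ≤ τ * c * (a ^ (1 - θ) + b ^ (1 - θ))⁻¹ := by positivity
        nlinarith [Real.exp_pos (τ * c ^ θ), Real.exp_pos (τ * a ^ θ),
          mul_nonneg (mul_nonneg (Real.exp_pos (τ * c ^ θ)).le
            (Real.exp_pos (τ * a ^ θ)).le) h2]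

/-- For every `s ≥ 1` there exists a constant `C > 0` depending only on `s`
(one may take `C = 4`) such that for every `τ ≥ 0`, every `d ≥ 1`, and all
nonzero `j, k, l ∈ ℤ^d` with `j + k = l`,
`|e^{τ|l|^{1/s}} − e^{τ|k|^{1/s}}| ≤ C τ |j| (|k|^{1−1/s} + |l|^{1−1/s})⁻¹ e^{τ|j|^{1/s}} e^{τ|k|^{1/s}}`. -/
theorem gevrey_weight_difference_bound (s : ℝ) (hs : 1 ≤ s) :
    ∃ C : ℝ, C = 4 ∧ 0 < C ∧
      ∀ τ : ℝ, 0 ≤ τ → ∀ d : ℕ, 1 ≤ d →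
        ∀ j k l : Fin d → ℤ, j ≠ 0 → k ≠ 0 → l ≠ 0 → j + k = l →
          |Real.exp (τ * znorm l ^ (1 / s)) - Real.exp (τ * znorm k ^ (1 / s))| ≤
            C * τ * znorm j * (znorm k ^ (1 - 1 / s) + znorm l ^ (1 - 1 / s))⁻¹ *
              Real.exp (τ * znorm j ^ (1 / s)) * Real.exp (τ * znorm k ^ (1 / s)) := by
  refine ⟨4, rfl, by norm_num, ?_⟩
  intro τ hτ d hd j k l hj hk hl hjkl
  have hs0 : (0:ℝ) < s := lt_of_lt_of_le one_pos hs
  have hθ0 : 0 < 1 / s := by positivity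
  have hθ1 : 1 / s ≤ 1 := (div_le_one hs0).mpr hs
  set θ := 1 / s with hθdef
  have ha : 1 ≤ znorm k := one_le_znorm hk
  have hb : 1 ≤ znorm l := one_le_znorm hl
  have hc : 1 ≤ znorm j := one_le_znorm hj
  have htri : |znorm l - znorm k| ≤ znorm j := znorm_triangle j k l hjkl
  obtain ⟨htri1, htri2⟩ := abs_le.mp htri
  rcases le_total (znorm k) (znorm l) with hab | hba
  · have key := gevrey_main_aux (c := znorm j) hθ0 hθ1 hτ ha hab (by linarith) (by linarith)
    have hle : Real.exp (τ * znorm k ^ θ) ≤ Real.exp (τ * znorm l ^ θ) := by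
      apply Real.exp_le_exp.mpr
      exact mul_le_mul_of_nonneg_left
        (Real.rpow_le_rpow (by linarith) hab hθ0.le) hτ
    rw [abs_of_nonneg (by linarith)]
    exact key
  · have key := gevrey_main_aux (c := znorm j) hθ0 hθ1 hτ hb hba (by linarith) (by linarith)
    rw [add_comm ((znorm l) ^ (1 - θ)) ((znorm k) ^ (1 - θ))] at key
    have hle : Real.exp (τ * znorm l ^ θ) ≤ Real.exp (τ * znorm k ^ θ) := by
      apply Real.exp_le_exp.mpr
      exact mul_le_mul_of_nonneg_left
        (Real.rpow_le_rpow (by linarith) hba hθ0.le) hτ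
    calc |Real.exp (τ * znorm l ^ θ) - Real.exp (τ * znorm k ^ θ)|
        = Real.exp (τ * znorm k ^ θ) - Real.exp (τ * znorm l ^ θ) := by
          rw [abs_sub_comm, abs_of_nonneg (by linarith)]
      _ ≤ 4 * τ * znorm j * (znorm k ^ (1 - θ) + znorm l ^ (1 - θ))⁻¹ *
            Real.exp (τ * znorm j ^ θ) * Real.exp (τ * znorm l ^ θ) := key
      _ ≤ 4 * τ * znorm j * (znorm k ^ (1 - θ) + znorm l ^ (1 - θ))⁻¹ *
            Real.exp (τ * znorm j ^ θ) * Real.exp (τ * znorm k ^ θ) := by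
          have hD : (0:ℝ) < znorm k ^ (1 - θ) + znorm l ^ (1 - θ) := by
            have h1 : (0:ℝ) < znorm k := by linarith
            have h2 : (0:ℝ) < znorm l := by linarith
            positivity
          have hfac : (0:ℝ) ≤ 4 * τ * znorm j *
              (znorm k ^ (1 - θ) + znorm l ^ (1 - θ))⁻¹ *
              Real.exp (τ * znorm j ^ θ) := by positivity
          exact mul_le_mul_of_nonneg_left hle hfac
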